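/- Let X be a complete metric space and Y a complete linear metric space with shift-invariant metric, F, G : X ⇉ Y with F having locally closed graph around (x̄,ȳ) ∈ graph F and G having locally closed graph around (x̄,z̄) ∈ graph G. Then lopen(F+G)(x̄, ȳ+z̄) ≥ sur F(x̄,ȳ) − lip G(x̄,z̄). -/

import Mathlib

open Metric Set Filter Topology
open scoped ENNReal NNReal Pointwise

noncomputable section

/-- The image of a set under a set-valued mapping. -/
def SVImage {X Y : Type*} (F : X → Set Y) (s : Set X) : Set Y := ⋃ x ∈ s, F x

/-- The modulus of openness (openness with a linear rate at a point). -/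
def lopenMod {X Y : Type*} [PseudoMetricSpace X] [PseudoMetricSpace Y]
    (F : X → Set Y) (xb : X) (yb : Y) : ℝ≥0∞ :=
  sSup (ENNReal.ofReal '' {c : ℝ | 0 < c ∧ ∃ ε > (0:ℝ), ∀ t ∈ Ioo (0:ℝ) ε,
    closedBall yb (c * t) ⊆ SVImage F (closedBall xb t)})

/-- The modulus of surjection (openness with a linear rate around a point). -/
def surMod {X Y : Type*} [PseudoMetricSpace X] [PseudoMetricSpace Y]
    (F : X → Set Y) (xb : X) (yb : Y) : ℝ≥0∞ :=
  sSup (ENNReal.ofReal '' {c : ℝ | 0 < c ∧ ∃ ε > (0:ℝ), ∃ U ∈ 𝓝 xb, ∃ V ∈ 𝓝 yb,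
    ∀ x ∈ U, ∀ y ∈ V, y ∈ F x → ∀ t ∈ Ioo (0:ℝ) ε,
      closedBall y (c * t) ⊆ SVImage F (closedBall x t)})

/-- The semiregularity modulus. -/
def semiregMod {X Y : Type*} [PseudoMetricSpace X] [PseudoMetricSpace Y]
    (F : X → Set Y) (xb : X) (yb : Y) : ℝ≥0∞ :=
  sInf (ENNReal.ofReal '' {κ : ℝ | 0 < κ ∧ ∃ V ∈ 𝓝 yb, ∀ y ∈ V,
    EMetric.infEdist xb {x | y ∈ F x} ≤ ENNReal.ofReal (κ * dist yb y)})

/-- The Lipschitz (Aubin) modulus of a set-valued mapping. -/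
def lipMod {X Y : Type*} [PseudoMetricSpace X] [PseudoMetricSpace Y]
    (G : X → Set Y) (xb : X) (zb : Y) : ℝ≥0∞ :=
  sInf (ENNReal.ofReal '' {μ : ℝ | 0 < μ ∧ ∃ U ∈ 𝓝 xb, ∃ V ∈ 𝓝 zb,
    ∀ x ∈ U, ∀ x' ∈ U, ∀ z ∈ G x' ∩ V,
      EMetric.infEdist z (G x) ≤ ENNReal.ofReal (μ * dist x x')})

/-- The calmness modulus of a single-valued mapping. -/
def calmMod {X Y : Type*} [PseudoMetricSpace X] [PseudoMetricSpace Y]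
    (f : X → Y) (xb : X) : ℝ≥0∞ :=
  sInf (ENNReal.ofReal '' {μ : ℝ | 0 < μ ∧ ∃ U ∈ 𝓝 xb, ∀ x ∈ U,
    dist (f x) (f xb) ≤ μ * dist x xb})

end

theorem dc_aux {α : Type*} (P : ℕ → α → Prop) (R : ℕ → α → α → Prop) (a0 : α) (h0 : P 0 a0)
    (hstep : ∀ k a, P k a → ∃ a', P (k+1) a' ∧ R k a a') :
    ∃ f : ℕ → α, f 0 = a0 ∧ (∀ k, P k (f k)) ∧ ∀ k, R k (f k) (f (k+1)) := by
  choose! g hg1 hg2 using hstep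
  have hP : ∀ k, P k (Nat.rec a0 (fun k ih => g k ih) k) := by
    intro k
    induction k with
    | zero => exact h0
    | succ k ih => exact hg1 k _ ih
  exact ⟨fun k => Nat.rec a0 (fun k ih => g k ih) k, rfl, hP, fun k => hg2 k _ (hP k)⟩

set_option maxHeartbeats 1000000 in
theorem key_aux {X Y : Type*} [MetricSpace X] [CompleteSpace X]
    [AddCommGroup Y] [MetricSpace Y] [CompleteSpace Y]
    (hshift : ∀ y y' w : Y, dist (y + w) (y' + w) = dist y y')
    (F G : X → Set Y) (xb : X) (yb zb : Y) (hF : yb ∈ F xb) (hG : zb ∈ G xb)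
    (εcF : ℝ) (hεcF : 0 < εcF)
    (hFcl : IsClosed ({p : X × Y | p.2 ∈ F p.1} ∩ closedBall xb εcF ×ˢ closedBall yb εcF))
    (εcG : ℝ) (hεcG : 0 < εcG)
    (hGcl : IsClosed ({p : X × Y | p.2 ∈ G p.1} ∩ closedBall xb εcG ×ˢ closedBall zb εcG))
    (c μ γ : ℝ) (hμ0 : 0 < μ) (hγ0 : 0 < γ) (hγ : γ < c - μ)
    (εF : ℝ) (hεF : 0 < εF) (U : Set X) (hU : U ∈ 𝓝 xb) (V : Set Y) (hV : V ∈ 𝓝 yb)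
    (Hsur : ∀ x ∈ U, ∀ y ∈ V, y ∈ F x → ∀ t ∈ Ioo (0:ℝ) εF,
      closedBall y (c*t) ⊆ SVImage F (closedBall x t))
    (U' : Set X) (hU' : U' ∈ 𝓝 xb) (V' : Set Y) (hV' : V' ∈ 𝓝 zb)
    (Hlip : ∀ x ∈ U', ∀ x' ∈ U', ∀ z ∈ G x' ∩ V',
      EMetric.infEdist z (G x) ≤ ENNReal.ofReal (μ * dist x x')) :
    ∃ ε > (0:ℝ), ∀ t ∈ Ioo (0:ℝ) ε,
      closedBall (yb+zb) (γ*t) ⊆ SVImage (fun x => F x + G x) (closedBall xb t) := by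
  -- basic constants
  have hc0 : 0 < c := by linarith
  set μ' : ℝ := c - γ with hμ'def
  have hμμ' : μ < μ' := by simp only [hμ'def]; linarith
  have hμ'0 : 0 < μ' := by linarith
  have hμ'c : μ' < c := by simp only [hμ'def]; linarith
  set θ : ℝ := μ' / c with hθdef
  have hθ0 : 0 ≤ θ := by positivity
  have hθ1 : θ < 1 := by rw [hθdef, div_lt_one hc0]; exact hμ'c
  set K : ℝ := 2*γ + μ' with hKdef
  have hK0 : 0 < K := by positivity
  have hμ'θc : μ' = θ * c := by rw [hθdef]; field_simp
  have h1θ : 1 - θ = γ / c := by rw [hθdef, hμ'def]; field_simp; ring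
  have hc' : c ≠ 0 := ne_of_gt hc0
  have hγ' : γ ≠ 0 := ne_of_gt hγ0
  -- shift helpers
  have hd1 : ∀ a b w : Y, dist (w + a) (w + b) = dist a b := by
    intro a b w; rw [add_comm w a, add_comm w b]; exact hshift a b w
  have hadd : ∀ a a' b b' : Y, dist (a+b) (a'+b') ≤ dist a a' + dist b b' := by
    intro a a' b b'
    calc dist (a+b) (a'+b') ≤ dist (a+b) (a'+b) + dist (a'+b) (a'+b') := dist_triangle _ _ _
    _ = dist a a' + dist b b' := by rw [hshift, hd1]
  have hsub : ∀ u w z : Y, dist (u - z) w = dist u (w + z) := by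
    intro u w z; rw [← hshift (u-z) w z, sub_add_cancel]
  -- neighborhood radii
  obtain ⟨δ₁, hδ₁0, hδ₁⟩ := Metric.nhds_basis_closedBall.mem_iff.1 (inter_mem hU hU')
  obtain ⟨δ₂, hδ₂0, hδ₂⟩ := Metric.nhds_basis_closedBall.mem_iff.1 hV
  obtain ⟨δ₃, hδ₃0, hδ₃⟩ := Metric.nhds_basis_closedBall.mem_iff.1 hV'
  refine ⟨min (min δ₁ (min (δ₂/K) (δ₃/μ'))) (min (c*εF/(2*γ)) (min (min εcF (εcF/K)) (min εcG (εcG/μ')))),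
    by positivity, ?_⟩
  clear_value μ' θ K
  rintro t ⟨ht0, htε⟩ y hy
  -- constraints on t
  have ht1 : t ≤ δ₁ := le_of_lt (lt_of_lt_of_le htε (le_trans (min_le_left _ _) (min_le_left _ _)))
  have ht2 : K * t ≤ δ₂ := by
    have h : t ≤ δ₂ / K := le_of_lt (lt_of_lt_of_le htε (le_trans (min_le_left _ _)
      (le_trans (min_le_right _ _) (min_le_left _ _))))
    calc K * t ≤ K * (δ₂ / K) := mul_le_mul_of_nonneg_left h hK0.le
    _ = δ₂ := by field_simp
  have ht3 : μ' * t ≤ δ₃ := by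
    have h : t ≤ δ₃ / μ' := le_of_lt (lt_of_lt_of_le htε (le_trans (min_le_left _ _)
      (le_trans (min_le_right _ _) (min_le_right _ _))))
    calc μ' * t ≤ μ' * (δ₃ / μ') := mul_le_mul_of_nonneg_left h hμ'0.le
    _ = δ₃ := by field_simp
  have ht4 : γ * t < c * εF := by
    have h1 : t ≤ c*εF/(2*γ) := le_of_lt (lt_of_lt_of_le htε (le_trans (min_le_right _ _)
      (min_le_left _ _)))
    have h2 : γ * t ≤ c*εF/2 := by
      calc γ * t ≤ γ * (c*εF/(2*γ)) := mul_le_mul_of_nonneg_left h1 hγ0.le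
      _ = c*εF/2 := by field_simp
    have h3 : 0 < c * εF := mul_pos hc0 hεF
    linarith
  have ht5 : t ≤ εcF := le_of_lt (lt_of_lt_of_le htε (le_trans (min_le_right _ _)
    (le_trans (min_le_right _ _) (le_trans (min_le_left _ _) (min_le_left _ _)))))
  have ht6 : K * t ≤ εcF := by
    have h : t ≤ εcF / K := le_of_lt (lt_of_lt_of_le htε (le_trans (min_le_right _ _)
      (le_trans (min_le_right _ _) (le_trans (min_le_left _ _) (min_le_right _ _)))))
    calc K * t ≤ K * (εcF / K) := mul_le_mul_of_nonneg_left h hK0.le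
    _ = εcF := by field_simp
  have ht7 : t ≤ εcG := le_of_lt (lt_of_lt_of_le htε (le_trans (min_le_right _ _)
    (le_trans (min_le_right _ _) (le_trans (min_le_right _ _) (min_le_left _ _)))))
  have ht8 : μ' * t ≤ εcG := by
    have h : t ≤ εcG / μ' := le_of_lt (lt_of_lt_of_le htε (le_trans (min_le_right _ _)
      (le_trans (min_le_right _ _) (le_trans (min_le_right _ _) (min_le_right _ _)))))
    calc μ' * t ≤ μ' * (εcG / μ') := mul_le_mul_of_nonneg_left h hμ'0.le
    _ = εcG := by field_simp
  clear htε
  -- setup for the iteration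
  rw [mem_closedBall] at hy
  set r : ℝ := dist y (yb + zb) with hrdef
  have hr0 : 0 ≤ r := hrdef ▸ dist_nonneg
  clear_value r
  have hrγt : r ≤ γ * t := hy
  have hrγ_t : r / γ ≤ t := by rw [div_le_iff₀ hγ0]; linarith
  have hrγ0 : 0 ≤ r / γ := div_nonneg hr0 hγ0.le
  -- key algebraic identity
  have halg : ∀ k : ℕ, (r/γ) * (1 - θ^k) + θ^k * (r/c) = (r/γ) * (1 - θ^(k+1)) := by
    intro k
    have h2 : (r/γ) * (γ/c) = r/c := by field_simp
    have h3 : (r/γ) * (1-θ) = r/c := by rw [h1θ]; exact h2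
    calc (r/γ) * (1 - θ^k) + θ^k * (r/c)
        = (r/γ) * (1 - θ^k) + θ^k * ((r/γ)*(1-θ)) := by rw [h3]
    _ = (r/γ) * (1 - θ^k * θ) := by ring
    _ = (r/γ) * (1 - θ^(k+1)) := by rw [← pow_succ]
  have hθpow : ∀ k : ℕ, (0:ℝ) ≤ θ^k := fun k => pow_nonneg hθ0 k
  have hθpow1 : ∀ k : ℕ, θ^k ≤ 1 := fun k => pow_le_one₀ hθ0 hθ1.le
  have hθmono : ∀ k : ℕ, θ^(k+1) ≤ θ^k := fun k =>
    pow_le_pow_of_le_one hθ0 hθ1.le (Nat.le_succ k)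
  have hfrac : ∀ k : ℕ, (r/γ) * (1 - θ^k) ≤ r/γ := fun k =>
    mul_le_of_le_one_right hrγ0 (by linarith [hθpow k])
  have hθr : ∀ k : ℕ, θ^k * r ≤ r := fun k =>
    mul_le_of_le_one_left hr0 (hθpow1 k)
  -- auxiliary bounds
  have hy_bound : ∀ (k:ℕ) (y_ z_ : Y), dist y (y_ + z_) ≤ θ^k * r →
      dist z_ zb ≤ μ' * ((r/γ) * (1 - θ^k)) → dist y_ yb ≤ K * t := by
    intro k y_ z_ hyz hzb
    have h1 : dist y_ yb = dist (y_ + z_) (yb + z_) := (hshift _ _ _).symm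
    have h2 : dist (y_ + z_) (yb + z_) ≤ dist (y_ + z_) y + dist y (yb + zb) + dist (yb + zb) (yb + z_) :=
      dist_triangle4 _ _ _ _
    have h3 : dist (yb + zb) (yb + z_) = dist zb z_ := hd1 _ _ _
    have h4 : dist (y_ + z_) y ≤ θ^k * r := by rw [dist_comm]; exact hyz
    have h5 : dist zb z_ ≤ μ' * ((r/γ) * (1 - θ^k)) := by rw [dist_comm]; exact hzb
    have h7 : μ' * ((r/γ) * (1 - θ^k)) ≤ μ' * (r/γ) := mul_le_mul_of_nonneg_left (hfrac k) hμ'0.le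
    have h8 : μ' * (r/γ) ≤ μ' * t := mul_le_mul_of_nonneg_left hrγ_t hμ'0.le
    rw [h3] at h2
    rw [hKdef, h1]
    have h6 := hθr k
    linarith
  -- the inductive step
  have hstep : ∀ (k:ℕ) (s : X × Y × Y),
      (s.2.1 ∈ F s.1 ∧ s.2.2 ∈ G s.1 ∧ dist y (s.2.1 + s.2.2) ≤ θ^k * r ∧
       dist s.1 xb ≤ (r/γ) * (1 - θ^k) ∧ dist s.2.2 zb ≤ μ' * ((r/γ) * (1 - θ^k))) →
      ∃ s' : X × Y × Y,
      (s'.2.1 ∈ F s'.1 ∧ s'.2.2 ∈ G s'.1 ∧ dist y (s'.2.1 + s'.2.2) ≤ θ^(k+1) * r ∧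
       dist s'.1 xb ≤ (r/γ) * (1 - θ^(k+1)) ∧ dist s'.2.2 zb ≤ μ' * ((r/γ) * (1 - θ^(k+1)))) ∧
      (dist s'.1 s.1 ≤ θ^k * (r/c) ∧ dist s'.2.1 s.2.1 ≤ θ^k * r ∧
       dist s'.2.2 s.2.2 ≤ μ' * (θ^k * (r/c))) := by
    intro k s hs
    obtain ⟨x, y_, z_⟩ := s
    obtain ⟨hyF, hzG, hyz, hxB, hzB⟩ := hs
    dsimp only at hyF hzG hyz hxB hzB
    have hmono1 : (r/γ) * (1 - θ^k) ≤ (r/γ) * (1 - θ^(k+1)) :=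
      mul_le_mul_of_nonneg_left (by linarith [hθmono k]) hrγ0
    by_cases hcase : y = y_ + z_
    · refine ⟨(x, y_, z_), ⟨hyF, hzG, ?_, ?_, ?_⟩, ?_, ?_, ?_⟩
      · show dist y (y_ + z_) ≤ _
        rw [← hcase, dist_self]
        exact mul_nonneg (hθpow _) hr0
      · show dist x xb ≤ _
        exact le_trans hxB hmono1
      · show dist z_ zb ≤ _
        exact le_trans hzB (mul_le_mul_of_nonneg_left hmono1 hμ'0.le)
      · show dist x x ≤ _
        rw [dist_self]
        exact mul_nonneg (hθpow _) (div_nonneg hr0 hc0.le)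
      · show dist y_ y_ ≤ _
        rw [dist_self]
        exact mul_nonneg (hθpow _) hr0
      · show dist z_ z_ ≤ _
        rw [dist_self]
        exact mul_nonneg hμ'0.le (mul_nonneg (hθpow _) (div_nonneg hr0 hc0.le))
    · -- nontrivial step
      have hrk0 : 0 < dist y (y_ + z_) := dist_pos.2 hcase
      set sk : ℝ := dist y (y_ + z_) / c with hskdef
      have hsk0 : 0 < sk := hskdef ▸ div_pos hrk0 hc0
      clear_value sk
      have hskεF : sk < εF := by
        rw [hskdef, div_lt_iff₀ hc0]
        calc dist y (y_ + z_) ≤ θ^k * r := hyz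
        _ ≤ γ * t := le_trans (hθr k) hrγt
        _ < c * εF := ht4
        _ = εF * c := mul_comm _ _
      have hskbound : sk ≤ θ^k * (r/c) := by
        rw [hskdef, div_le_iff₀ hc0]
        calc dist y (y_ + z_) ≤ θ^k * r := hyz
        _ = θ^k * (r/c) * c := by field_simp
      -- memberships
      have hxUU' : x ∈ U ∩ U' := by
        refine hδ₁ (mem_closedBall.2 ?_)
        linarith [hfrac k, le_trans hrγ_t ht1]
      have hy_V : y_ ∈ V := hδ₂ (mem_closedBall.2 (le_trans (hy_bound k y_ z_ hyz hzB) ht2))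
      have hz_V' : z_ ∈ V' := by
        refine hδ₃ (mem_closedBall.2 ?_)
        have h7 : μ' * ((r/γ) * (1 - θ^k)) ≤ μ' * (r/γ) := mul_le_mul_of_nonneg_left (hfrac k) hμ'0.le
        have h8 : μ' * (r/γ) ≤ μ' * t := mul_le_mul_of_nonneg_left hrγ_t hμ'0.le
        linarith
      -- apply openness of F
      have hmem : y - z_ ∈ closedBall y_ (c * sk) := by
        rw [mem_closedBall, hsub y y_ z_, hskdef, mul_div_cancel₀ _ hc']
      have hSV := Hsur x hxUU'.1 y_ hy_V hyF sk ⟨hsk0, hskεF⟩ hmem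
      simp only [SVImage, mem_iUnion, exists_prop] at hSV
      obtain ⟨x', hx'ball, hFx'⟩ := hSV
      rw [mem_closedBall] at hx'ball
      -- new x-bound
      have hx'B : dist x' xb ≤ (r/γ) * (1 - θ^(k+1)) := by
        calc dist x' xb ≤ dist x' x + dist x xb := dist_triangle _ _ _
        _ ≤ sk + (r/γ)*(1-θ^k) := add_le_add hx'ball hxB
        _ ≤ θ^k * (r/c) + (r/γ)*(1-θ^k) := by linarith
        _ = (r/γ) * (1 - θ^(k+1)) := by rw [← halg k]; ring
      have hx'U' : x' ∈ U ∩ U' := by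
        refine hδ₁ (mem_closedBall.2 ?_)
        linarith [hfrac (k+1), le_trans hrγ_t ht1]
      -- apply Lipschitz property of G to get z'
      have hlip := Hlip x' hx'U'.2 x hxUU'.2 z_ ⟨hzG, hz_V'⟩
      have hz' : ∃ z' ∈ G x', dist z_ z' ≤ μ' * sk := by
        by_cases hxx : x' = x
        · exact ⟨z_, hxx ▸ hzG, by rw [dist_self]; exact mul_nonneg hμ'0.le hsk0.le⟩
        · have hd0 : 0 < dist x' x := dist_pos.2 hxx
          have hlt : EMetric.infEdist z_ (G x') < ENNReal.ofReal (μ' * dist x' x) := by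
            refine lt_of_le_of_lt hlip ?_
            exact (ENNReal.ofReal_lt_ofReal_iff (mul_pos hμ'0 hd0)).2
              (mul_lt_mul_of_pos_right hμμ' hd0)
          obtain ⟨z', hz'G, hz'd⟩ := EMetric.infEdist_lt_iff.1 hlt
          rw [edist_lt_ofReal] at hz'd
          refine ⟨z', hz'G, le_of_lt (lt_of_lt_of_le hz'd
            (mul_le_mul_of_nonneg_left hx'ball hμ'0.le))⟩
      obtain ⟨z', hz'G, hz'd⟩ := hz'
      have hz'd' : dist z' z_ ≤ μ' * sk := by rw [dist_comm]; exact hz'd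
      have hskb2 : μ' * sk ≤ μ' * (θ^k * (r/c)) := mul_le_mul_of_nonneg_left hskbound hμ'0.le
      -- distance computation: dist y ((y - z_) + z') = dist z_ z'
      have hkey : dist y ((y - z_) + z') = dist z_ z' := by
        have h1 : (y - z_) + z' = (y + z') - z_ := by abel
        rw [h1, dist_comm, hsub (y + z') y z_, hd1]
        exact dist_comm z' z_
      have hμsk : μ' * sk ≤ θ^(k+1) * r := by
        have h : μ' * (θ^k * (r/c)) = θ^(k+1) * r := by
          rw [pow_succ, hμ'θc]; field_simp
        linarith
      refine ⟨(x', y - z_, z'), ⟨hFx', hz'G, ?_, hx'B, ?_⟩, ?_, ?_, ?_⟩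
      · show dist y ((y - z_) + z') ≤ _
        rw [hkey]; linarith
      · show dist z' zb ≤ _
        calc dist z' zb ≤ dist z' z_ + dist z_ zb := dist_triangle _ _ _
        _ ≤ μ' * sk + μ' * ((r/γ)*(1-θ^k)) := add_le_add hz'd' hzB
        _ ≤ μ' * (θ^k * (r/c)) + μ' * ((r/γ)*(1-θ^k)) := by linarith
        _ = μ' * ((r/γ)*(1-θ^(k+1))) := by rw [← halg k]; ring
      · show dist x' x ≤ _
        linarith
      · show dist (y - z_) y_ ≤ _
        rw [hsub y y_ z_]; exact hyz
      · show dist z' z_ ≤ _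
        linarith
  -- initial state
  have h0 : ((xb, yb, zb) : X × Y × Y).2.1 ∈ F (xb, yb, zb).1 ∧
      ((xb, yb, zb) : X × Y × Y).2.2 ∈ G (xb, yb, zb).1 ∧
      dist y (((xb, yb, zb) : X × Y × Y).2.1 + ((xb, yb, zb) : X × Y × Y).2.2) ≤ θ^0 * r ∧
      dist ((xb, yb, zb) : X × Y × Y).1 xb ≤ (r/γ) * (1 - θ^0) ∧
      dist ((xb, yb, zb) : X × Y × Y).2.2 zb ≤ μ' * ((r/γ) * (1 - θ^0)) := by
    refine ⟨hF, hG, ?_, ?_, ?_⟩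
    · show dist y (yb + zb) ≤ _
      rw [pow_zero, one_mul, ← hrdef]
    · show dist xb xb ≤ _
      rw [dist_self, pow_zero, sub_self, mul_zero]
    · show dist zb zb ≤ _
      rw [dist_self, pow_zero, sub_self, mul_zero, mul_zero]
  obtain ⟨f, hf0, hfP, hfR⟩ := dc_aux
    (fun k s => s.2.1 ∈ F s.1 ∧ s.2.2 ∈ G s.1 ∧ dist y (s.2.1 + s.2.2) ≤ θ^k * r ∧
      dist s.1 xb ≤ (r/γ) * (1 - θ^k) ∧ dist s.2.2 zb ≤ μ' * ((r/γ) * (1 - θ^k)))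
    (fun k s s' => dist s'.1 s.1 ≤ θ^k * (r/c) ∧ dist s'.2.1 s.2.1 ≤ θ^k * r ∧
      dist s'.2.2 s.2.2 ≤ μ' * (θ^k * (r/c)))
    (xb, yb, zb) h0 hstep
  -- Cauchy sequences and limits
  have hcx : CauchySeq (fun k => (f k).1) := by
    refine cauchySeq_of_le_geometric θ (r/c) hθ1 fun n => ?_
    rw [dist_comm]
    calc dist (f (n+1)).1 (f n).1 ≤ θ^n * (r/c) := (hfR n).1
    _ = (r/c) * θ^n := mul_comm _ _
  have hcy : CauchySeq (fun k => (f k).2.1) := by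
    refine cauchySeq_of_le_geometric θ r hθ1 fun n => ?_
    rw [dist_comm]
    calc dist (f (n+1)).2.1 (f n).2.1 ≤ θ^n * r := (hfR n).2.1
    _ = r * θ^n := mul_comm _ _
  have hcz : CauchySeq (fun k => (f k).2.2) := by
    refine cauchySeq_of_le_geometric θ (μ' * (r/c)) hθ1 fun n => ?_
    rw [dist_comm]
    calc dist (f (n+1)).2.2 (f n).2.2 ≤ μ' * (θ^n * (r/c)) := (hfR n).2.2
    _ = μ' * (r/c) * θ^n := by ring
  obtain ⟨xl, hxl⟩ := cauchySeq_tendsto_of_complete hcx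
  obtain ⟨yl, hyl⟩ := cauchySeq_tendsto_of_complete hcy
  obtain ⟨zl, hzl⟩ := cauchySeq_tendsto_of_complete hcz
  -- bounds on the sequence
  have hxk : ∀ k, dist (f k).1 xb ≤ t := fun k =>
    le_trans (hfP k).2.2.2.1 (le_trans (hfrac k) hrγ_t)
  have hyk : ∀ k, dist (f k).2.1 yb ≤ K * t := fun k =>
    hy_bound k (f k).2.1 (f k).2.2 (hfP k).2.2.1 (hfP k).2.2.2.2
  have hzk : ∀ k, dist (f k).2.2 zb ≤ μ' * t := fun k => by
    have h1 := (hfP k).2.2.2.2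
    have h7 : μ' * ((r/γ) * (1 - θ^k)) ≤ μ' * (r/γ) := mul_le_mul_of_nonneg_left (hfrac k) hμ'0.le
    have h8 : μ' * (r/γ) ≤ μ' * t := mul_le_mul_of_nonneg_left hrγ_t hμ'0.le
    linarith
  -- limit memberships
  have hxlb : xl ∈ closedBall xb t :=
    Metric.isClosed_closedBall.mem_of_tendsto hxl (Eventually.of_forall fun k => mem_closedBall.2 (hxk k))
  have hxyl : (xl, yl) ∈ {p : X × Y | p.2 ∈ F p.1} ∩ closedBall xb εcF ×ˢ closedBall yb εcF := by
    refine hFcl.mem_of_tendsto (hxl.prodMk_nhds hyl) (Eventually.of_forall fun k => ?_)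
    refine ⟨(hfP k).1, ?_, ?_⟩
    · exact mem_closedBall.2 (le_trans (hxk k) ht5)
    · exact mem_closedBall.2 (le_trans (hyk k) ht6)
  have hxzl : (xl, zl) ∈ {p : X × Y | p.2 ∈ G p.1} ∩ closedBall xb εcG ×ˢ closedBall zb εcG := by
    refine hGcl.mem_of_tendsto (hxl.prodMk_nhds hzl) (Eventually.of_forall fun k => ?_)
    refine ⟨(hfP k).2.1, ?_, ?_⟩
    · exact mem_closedBall.2 (le_trans (hxk k) ht7)
    · exact mem_closedBall.2 (le_trans (hzk k) ht8)
  -- y = yl + zl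
  have heq : y = yl + zl := by
    have hbound : ∀ k, dist y (yl + zl) ≤ θ^k * r + (dist (f k).2.1 yl + dist (f k).2.2 zl) := by
      intro k
      calc dist y (yl + zl) ≤ dist y ((f k).2.1 + (f k).2.2) + dist ((f k).2.1 + (f k).2.2) (yl + zl) :=
        dist_triangle _ _ _
      _ ≤ θ^k * r + (dist (f k).2.1 yl + dist (f k).2.2 zl) :=
        add_le_add (hfP k).2.2.1 (hadd _ _ _ _)
    have htend : Tendsto (fun k => θ^k * r + (dist (f k).2.1 yl + dist (f k).2.2 zl))
        atTop (𝓝 (0 * r + (0 + 0))) := by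
      refine Tendsto.add (Tendsto.mul_const r (tendsto_pow_atTop_nhds_zero_of_lt_one hθ0 hθ1))
        (Tendsto.add ?_ ?_)
      · exact (tendsto_iff_dist_tendsto_zero.1 hyl)
      · exact (tendsto_iff_dist_tendsto_zero.1 hzl)
    rw [zero_mul, add_zero, zero_add] at htend
    have h0' : dist y (yl + zl) ≤ 0 := ge_of_tendsto htend (Eventually.of_forall hbound)
    exact dist_le_zero.1 h0'
  -- conclusion
  simp only [SVImage, mem_iUnion, exists_prop]
  exact ⟨xl, hxlb, heq ▸ Set.add_mem_add hxyl.1 hxzl.1⟩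


/-- `lopen (F+G)(xb, yb+zb) ≥ sur F (xb,yb) − lip G (xb,zb)` (with
truncated subtraction, so the inequality is trivially true when
`sur F (xb,yb) ≤ lip G (xb,zb)`), for `F` and `G` with locally closed graphs, `X`
complete, and `Y` a complete linear metric space with shift-invariant metric. -/
theorem lopen_sum_ge_sur_sub_lip {X Y : Type*} [MetricSpace X] [CompleteSpace X]
    [AddCommGroup Y] [MetricSpace Y] [CompleteSpace Y]
    (hshift : ∀ y y' w : Y, dist (y + w) (y' + w) = dist y y')
    (F G : X → Set Y) (xb : X) (yb zb : Y) (hF : yb ∈ F xb) (hG : zb ∈ G xb)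
    (hFclosed : ∃ ε > (0:ℝ), IsClosed ({p : X × Y | p.2 ∈ F p.1} ∩
      closedBall xb ε ×ˢ closedBall yb ε))
    (hGclosed : ∃ ε > (0:ℝ), IsClosed ({p : X × Y | p.2 ∈ G p.1} ∩
      closedBall xb ε ×ˢ closedBall zb ε)) :
    surMod F xb yb - lipMod G xb zb ≤
      lopenMod (fun x => F x + G x) xb (yb + zb) := by
  obtain ⟨εcF, hεcF, hFcl⟩ := hFclosed
  obtain ⟨εcG, hεcG, hGcl⟩ := hGclosed
  rw [tsub_le_iff_right]
  apply sSup_le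
  rintro a ⟨cc, ⟨hc0, εF, hεF, U, hU, V, hV, Hsur⟩, rfl⟩
  -- reduce to each Lipschitz constant
  unfold lipMod
  rw [sInf_eq_iInf', ENNReal.add_iInf]
  refine le_iInf fun s => ?_
  obtain ⟨μ, ⟨hμ0, U', hU', V', hV', Hlip⟩, hs⟩ := s.2
  by_cases hcmp : cc ≤ μ
  · refine le_trans ?_ le_add_self
    rw [← hs]
    exact ENNReal.ofReal_le_ofReal hcmp
  push_neg at hcmp
  -- main case: μ < cc
  have hkey : ENNReal.ofReal (cc - μ) ≤ lopenMod (fun x => F x + G x) xb (yb + zb) := by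
    refine le_of_forall_lt fun a' ha' => ?_
    have ha'top : a' ≠ ⊤ := ne_top_of_lt (lt_of_lt_of_le ha' le_top)
    have ha'lt : a'.toReal < cc - μ := by
      rw [← ENNReal.ofReal_toReal ha'top] at ha'
      exact (ENNReal.ofReal_lt_ofReal_iff (by linarith)).1 ha'
    set γ : ℝ := (a'.toReal + (cc - μ)) / 2 with hγdef
    have ha'0 : 0 ≤ a'.toReal := ENNReal.toReal_nonneg
    have hγ0 : 0 < γ := by rw [hγdef]; linarith
    have hγlt : γ < cc - μ := by rw [hγdef]; linarith
    obtain ⟨ε, hε0, hprop⟩ := key_aux hshift F G xb yb zb hF hG εcF hεcF hFcl εcG hεcG hGcl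
      cc μ γ hμ0 hγ0 hγlt εF hεF U hU V hV Hsur U' hU' V' hV' Hlip
    have hmem : ENNReal.ofReal γ ∈ ENNReal.ofReal '' {c : ℝ | 0 < c ∧ ∃ ε > (0:ℝ),
        ∀ t ∈ Ioo (0:ℝ) ε, closedBall (yb + zb) (c * t) ⊆
          SVImage (fun x => F x + G x) (closedBall xb t)} :=
      ⟨γ, ⟨hγ0, ε, hε0, hprop⟩, rfl⟩
    have h1 : a' < ENNReal.ofReal γ := by
      rw [← ENNReal.ofReal_toReal ha'top]
      exact (ENNReal.ofReal_lt_ofReal_iff hγ0).2 (by rw [hγdef]; linarith)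
    exact lt_of_lt_of_le h1 (le_sSup hmem)
  calc ENNReal.ofReal cc = ENNReal.ofReal (cc - μ) + ENNReal.ofReal μ := by
        rw [← ENNReal.ofReal_add (by linarith) hμ0.le]; ring_nf
  _ ≤ lopenMod (fun x => F x + G x) xb (yb + zb) + ENNReal.ofReal μ :=
        add_le_add hkey le_rfl
  _ = lopenMod (fun x => F x + G x) xb (yb + zb) + s := by rw [hs]
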